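/- Let G be a d-regular graph. If S and T are disjoint nonempty sets of vertices such that every vertex of S has at least d/2 neighbors in S and every vertex of T has at least d/2 neighbors in T (i.e., S and T are disjoint cores), then G admits an internal cut. -/

import Mathlib

open Finset
open scoped Classical

section Aux

variable {V : Type*} [Fintype V] [DecidableEq V]

/-- Twice the number of cut edges of a partition `(A, Aᶜ)`. -/
noncomputable def theCut (G : SimpleGraph V) [DecidableRel G.Adj] (A : Finset V) : ℕ :=
  ∑ u, ((G.neighborFinset u).filter (fun w => (w ∈ A) ≠ (u ∈ A))).card

lemma card_filter_split (s : Finset V) (P : V → Prop) [DecidablePred P] (v : V) :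
    (s.filter P).card
      = (s.filter (fun w => P w ∧ w ≠ v)).card + (if v ∈ s ∧ P v then 1 else 0) := by
  classical
  have h1 : (s.filter P).filter (fun w => w ≠ v) = s.filter (fun w => P w ∧ w ≠ v) := by
    rw [filter_filter]
  have h2 : (s.filter P).filter (fun w => ¬ w ≠ v) = if v ∈ s ∧ P v then {v} else ∅ := by
    have he : (s.filter P).filter (fun w => ¬ w ≠ v) = (s.filter P).filter (fun w => w = v) := by
      apply filter_congr; intro w _; simp
    rw [he, filter_eq']
    by_cases h : v ∈ s ∧ P v <;> simp [mem_filter, h]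
  have h3 := Finset.card_filter_add_card_filter_not
    (s := s.filter P) (p := fun w => w ≠ v)
  rw [h1, h2] at h3
  by_cases h : v ∈ s ∧ P v <;> simp [h] at h3 ⊢ <;> omega

lemma cut_erase (G : SimpleGraph V) [DecidableRel G.Adj] (A : Finset V) (v : V) (hv : v ∈ A) :
    theCut G (A.erase v) + 2 * ((G.neighborFinset v).filter (· ∉ A)).card
      = theCut G A + 2 * ((G.neighborFinset v).filter (· ∈ A)).card := by
  classical
  set A' := A.erase v with hA'
  have hmemA' : ∀ w, w ≠ v → (w ∈ A' ↔ w ∈ A) := fun w hw => by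
    simp [hA', Finset.mem_erase, hw]
  have hvA' : v ∉ A' := notMem_erase _ _
  have hsplit : ∀ B : Finset V, theCut G B =
      ((G.neighborFinset v).filter (fun w => (w ∈ B) ≠ (v ∈ B))).card
        + ∑ u ∈ univ.erase v, ((G.neighborFinset u).filter (fun w => (w ∈ B) ≠ (u ∈ B))).card := by
    intro B
    rw [theCut, ← Finset.add_sum_erase _ _ (mem_univ v)]
  -- term at v
  have hvA_term : ((G.neighborFinset v).filter (fun w => (w ∈ A) ≠ (v ∈ A))).card
      = ((G.neighborFinset v).filter (· ∉ A)).card := by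
    congr 1
    apply filter_congr
    intro w _
    simp [Ne, eq_iff_iff, hv]
  have hvA'_term : ((G.neighborFinset v).filter (fun w => (w ∈ A') ≠ (v ∈ A'))).card
      = ((G.neighborFinset v).filter (· ∈ A)).card := by
    congr 1
    apply filter_congr
    intro w hw
    have hwv : w ≠ v := (G.ne_of_adj (by rwa [← SimpleGraph.mem_neighborFinset])).symm
    simp [Ne, eq_iff_iff, hvA', hmemA' w hwv]
  -- per-u comparison for u ≠ v
  have hterm : ∀ u ∈ univ.erase v,
      ((G.neighborFinset u).filter (fun w => (w ∈ A') ≠ (u ∈ A'))).card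
        + (if v ∈ G.neighborFinset u ∧ u ∉ A then 1 else 0)
      = ((G.neighborFinset u).filter (fun w => (w ∈ A) ≠ (u ∈ A))).card
        + (if v ∈ G.neighborFinset u ∧ u ∈ A then 1 else 0) := by
    intro u hu
    have huv : u ≠ v := (mem_erase.mp hu).1
    have huA : u ∈ A' ↔ u ∈ A := hmemA' u huv
    have e1 := card_filter_split (G.neighborFinset u) (fun w => (w ∈ A') ≠ (u ∈ A')) v
    have e2 := card_filter_split (G.neighborFinset u) (fun w => (w ∈ A) ≠ (u ∈ A)) v
    have hcommon : (G.neighborFinset u).filter (fun w => ((w ∈ A') ≠ (u ∈ A')) ∧ w ≠ v)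
        = (G.neighborFinset u).filter (fun w => ((w ∈ A) ≠ (u ∈ A)) ∧ w ≠ v) := by
      apply filter_congr
      intro w _
      constructor <;> rintro ⟨h1, h2⟩ <;> refine ⟨?_, h2⟩ <;>
        simp_all [Ne, eq_iff_iff, hmemA' w h2, huA]
    rw [hcommon] at e1
    have hc1 : ((v ∈ A') ≠ (u ∈ A')) ↔ u ∈ A := by
      simp [Ne, eq_iff_iff, hvA', huA]
    have hc2 : ((v ∈ A) ≠ (u ∈ A)) ↔ u ∉ A := by
      simp [Ne, eq_iff_iff, hv]
    have i1 : (if v ∈ G.neighborFinset u ∧ ((v ∈ A') ≠ (u ∈ A')) then (1:ℕ) else 0)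
        = (if v ∈ G.neighborFinset u ∧ u ∈ A then 1 else 0) :=
      if_congr (and_congr_right fun _ => hc1) rfl rfl
    have i2 : (if v ∈ G.neighborFinset u ∧ ((v ∈ A) ≠ (u ∈ A)) then (1:ℕ) else 0)
        = (if v ∈ G.neighborFinset u ∧ u ∉ A then 1 else 0) :=
      if_congr (and_congr_right fun _ => hc2) rfl rfl
    rw [e1, e2, i1, i2]
    omega
  have hsum := Finset.sum_congr rfl hterm
  rw [Finset.sum_add_distrib, Finset.sum_add_distrib] at hsum
  -- identify the extra sums
  have hvv : v ∉ G.neighborFinset v := by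
    simp [SimpleGraph.mem_neighborFinset]
  have hout : ∑ u ∈ univ.erase v, (if v ∈ G.neighborFinset u ∧ u ∉ A then 1 else 0)
      = ((G.neighborFinset v).filter (· ∉ A)).card := by
    rw [Finset.sum_erase _ (by simp [hvv])]
    have he : (G.neighborFinset v).filter (· ∉ A)
        = univ.filter (fun u => v ∈ G.neighborFinset u ∧ u ∉ A) := by
      ext u
      simp [SimpleGraph.mem_neighborFinset, SimpleGraph.adj_comm]
    rw [he, Finset.card_filter]
  have hin : ∑ u ∈ univ.erase v, (if v ∈ G.neighborFinset u ∧ u ∈ A then 1 else 0)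
      = ((G.neighborFinset v).filter (· ∈ A)).card := by
    rw [Finset.sum_erase _ (by simp [hvv])]
    have he : (G.neighborFinset v).filter (· ∈ A)
        = univ.filter (fun u => v ∈ G.neighborFinset u ∧ u ∈ A) := by
      ext u
      simp [SimpleGraph.mem_neighborFinset, SimpleGraph.adj_comm]
    rw [he, Finset.card_filter]
  rw [hout, hin] at hsum
  rw [hsplit A, hsplit A', hvA_term, hvA'_term]
  omega

lemma cut_insert (G : SimpleGraph V) [DecidableRel G.Adj] (A : Finset V) (v : V) (hv : v ∉ A) :
    theCut G (insert v A) + 2 * ((G.neighborFinset v).filter (· ∈ A)).card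
      = theCut G A + 2 * ((G.neighborFinset v).filter (· ∉ A)).card := by
  classical
  have h := cut_erase G (insert v A) v (mem_insert_self v A)
  have he : (insert v A).erase v = A := Finset.erase_insert hv
  have hin : (G.neighborFinset v).filter (· ∈ insert v A)
      = (G.neighborFinset v).filter (· ∈ A) := by
    apply filter_congr
    intro w hw
    have hwv : w ≠ v := (G.ne_of_adj (by rwa [← SimpleGraph.mem_neighborFinset])).symm
    simp [Finset.mem_insert, hwv]
  have hout : (G.neighborFinset v).filter (· ∉ insert v A)
      = (G.neighborFinset v).filter (· ∉ A) := by
    apply filter_congr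
    intro w hw
    have hwv : w ≠ v := (G.ne_of_adj (by rwa [← SimpleGraph.mem_neighborFinset])).symm
    simp [Finset.mem_insert, hwv]
  rw [he, hin, hout] at h
  omega

end Aux

/-- If a `d`-regular graph has two disjoint nonempty cores `S` and `T`, then it
admits an internal cut. -/
theorem stmt_9 {V : Type*} [Fintype V] [DecidableEq V] (G : SimpleGraph V) [DecidableRel G.Adj]
    (d : ℕ) (hreg : ∀ v, G.degree v = d)
    (S T : Finset V) (hdisj : Disjoint S T) (hS : S.Nonempty) (hT : T.Nonempty)
    (hScore : ∀ v ∈ S, d ≤ 2 * ((G.neighborFinset v).filter (· ∈ S)).card)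
    (hTcore : ∀ v ∈ T, d ≤ 2 * ((G.neighborFinset v).filter (· ∈ T)).card) :
    ∃ A : Finset V, A.Nonempty ∧ Aᶜ.Nonempty ∧
      (∀ v ∈ A, ((G.neighborFinset v).filter (· ∉ A)).card ≤
        ((G.neighborFinset v).filter (· ∈ A)).card) ∧
      (∀ v ∉ A, ((G.neighborFinset v).filter (· ∈ A)).card ≤
        ((G.neighborFinset v).filter (· ∉ A)).card) := by
  classical
  set 𝒜 : Finset (Finset V) := univ.filter (fun A => S ⊆ A ∧ Disjoint A T) with h𝒜
  have hS𝒜 : S ∈ 𝒜 := by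
    simp [h𝒜, hdisj]
  obtain ⟨A, hA𝒜, hmin⟩ := Finset.exists_min_image 𝒜 (theCut G) ⟨S, hS𝒜⟩
  have hSA : S ⊆ A := (mem_filter.mp hA𝒜).2.1
  have hAT : Disjoint A T := (mem_filter.mp hA𝒜).2.2
  have hdeg : ∀ v, ((G.neighborFinset v).filter (· ∈ A)).card
      + ((G.neighborFinset v).filter (· ∉ A)).card = d := by
    intro v
    have h := Finset.card_filter_add_card_filter_not
      (s := G.neighborFinset v) (p := (· ∈ A))
    rw [G.card_neighborFinset_eq_degree, hreg] at h
    exact h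
  refine ⟨A, hS.mono hSA, ?_, ?_, ?_⟩
  · obtain ⟨t, ht⟩ := hT
    refine ⟨t, Finset.mem_compl.mpr fun h => ?_⟩
    exact (Finset.disjoint_left.mp hAT h) ht
  · intro v hv
    by_cases hvS : v ∈ S
    · have h1 := hScore v hvS
      have h2 : ((G.neighborFinset v).filter (· ∈ S)).card
          ≤ ((G.neighborFinset v).filter (· ∈ A)).card := by
        apply Finset.card_le_card
        apply Finset.monotone_filter_right
        intro w _ hw
        exact hSA hw
      have := hdeg v
      omega
    · by_contra hcon
      push_neg at hcon
      have hA' : A.erase v ∈ 𝒜 := by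
        simp only [h𝒜, mem_filter, mem_univ, true_and]
        exact ⟨fun s hs => Finset.mem_erase.mpr ⟨fun h => hvS (h ▸ hs), hSA hs⟩,
          hAT.mono_left (Finset.erase_subset _ _)⟩
      have hle := hmin _ hA'
      have := cut_erase G A v hv
      omega
  · intro v hv
    by_cases hvT : v ∈ T
    · have h1 := hTcore v hvT
      have h2 : ((G.neighborFinset v).filter (· ∈ T)).card
          ≤ ((G.neighborFinset v).filter (· ∉ A)).card := by
        apply Finset.card_le_card
        apply Finset.monotone_filter_right
        intro w _ hw
        exact fun hwA => (Finset.disjoint_left.mp hAT hwA) hw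
      have := hdeg v
      omega
    · by_contra hcon
      push_neg at hcon
      have hA' : insert v A ∈ 𝒜 := by
        simp only [h𝒜, mem_filter, mem_univ, true_and]
        refine ⟨hSA.trans (Finset.subset_insert _ _), ?_⟩
        rw [Finset.disjoint_left]
        intro w hw
        rcases Finset.mem_insert.mp hw with rfl | hw
        · exact hvT
        · exact fun hwT => (Finset.disjoint_left.mp hAT hw) hwT
      have hle := hmin _ hA'
      have := cut_insert G A v hv
      omega
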